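/- Let $r>0$, $p>1$, and let $u\in L^p_{loc}(\mathbb{R}^d;\mathbb{R}^m)$ be such that $u\equiv z$ on $\mathbb{R}^d\setminus B_{R-r\varepsilon}$ for some $z\in\mathbb{R}^m$, $R>r\varepsilon$. Then there exists $C=C(r,p,d)$ such that for every $\xi\in\mathbb{R}^d$ and $\varepsilon>0$: $\int_{\mathbb{R}^d}\left|\frac{u(x+\varepsilon\xi)-u(x)}{\varepsilon}\right|^p dx\le C(|\xi|^p+1)\,G^{r,p}_\varepsilon(u,\mathbb{R}^d)$, where $G^{r,p}_\varepsilon(u,\mathbb{R}^d)=\int_{B_r}\int_{\mathbb{R}^d}\left|\frac{u(x+\varepsilon\eta)-u(x)}{\varepsilon}\right|^p dx\,d\eta$. -/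

import Mathlib

open MeasureTheory Metric ENNReal Set

/-- The nonlocal energy `G^{r,p}_ε(u, ℝ^d)`. -/
noncomputable def Gen {d m : ℕ} (r p ε : ℝ)
    (u : EuclideanSpace ℝ (Fin d) → EuclideanSpace ℝ (Fin m)) : ℝ≥0∞ :=
  ∫⁻ η in ball (0 : EuclideanSpace ℝ (Fin d)) r,
    ∫⁻ x, (‖(ε⁻¹ : ℝ) • (u (x + ε • η) - u x)‖₊ : ℝ≥0∞) ^ p

set_option maxHeartbeats 2000000 in
/-- Long-range finite differences of functions constant outside a ball are controlled by
the short-range energy `G^{r,p}_ε(u, ℝ^d)`. -/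
theorem long_range_controlled_by_short_range (d m : ℕ) (r p : ℝ) (hr : 0 < r) (hp : 1 < p) :
    ∃ C : ℝ, 0 < C ∧
      ∀ (ε R : ℝ) (z : EuclideanSpace ℝ (Fin m))
        (u : EuclideanSpace ℝ (Fin d) → EuclideanSpace ℝ (Fin m)),
        0 < ε → r * ε < R →
        AEStronglyMeasurable u volume →
        (∀ x, x ∉ ball (0 : EuclideanSpace ℝ (Fin d)) (R - r * ε) → u x = z) →
        ∀ ξ : EuclideanSpace ℝ (Fin d),
          (∫⁻ x, (‖(ε⁻¹ : ℝ) • (u (x + ε • ξ) - u x)‖₊ : ℝ≥0∞) ^ p)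
            ≤ ENNReal.ofReal (C * (‖ξ‖ ^ p + 1)) * Gen r p ε u := by
  classical
  have hp0 : (0:ℝ) < p := lt_trans one_pos hp
  have hp0' : p ≠ 0 := hp0.ne'
  set v : ℝ≥0∞ := volume (ball (0 : EuclideanSpace ℝ (Fin d)) (r/2)) with hvdef
  have hv0 : 0 < v := measure_ball_pos _ _ (by positivity)
  have hvt : v ≠ ⊤ := measure_ball_lt_top.ne
  set vR : ℝ := v.toReal with hvRdef
  have hvR0 : 0 < vR := ENNReal.toReal_pos hv0.ne' hvt
  set A : ℝ := max 1 ((4/r) ^ p) with hAdef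
  have hA1 : (1:ℝ) ≤ A := le_max_left _ _
  refine ⟨A * 2 ^ (p+1) * vR⁻¹, by positivity, ?_⟩
  intro ε R z u hε hRr hu hconst ξ
  -- quasi measure preserving shears
  have hqmp : ∀ c : ℝ, Measure.QuasiMeasurePreserving
      (fun q : EuclideanSpace ℝ (Fin d) × EuclideanSpace ℝ (Fin d) => q.2 + c • q.1)
      ((volume : Measure (EuclideanSpace ℝ (Fin d))).prod volume) volume := by
    intro c
    have hm : Measurable (fun q : EuclideanSpace ℝ (Fin d) × EuclideanSpace ℝ (Fin d) =>
        q.2 + c • q.1) := measurable_snd.add (measurable_fst.const_smul c)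
    refine ⟨hm, Measure.AbsolutelyContinuous.mk fun s hs h0 => ?_⟩
    rw [Measure.map_apply hm hs, Measure.prod_apply (hm hs)]
    have h1 : ∀ η : EuclideanSpace ℝ (Fin d),
        volume (Prod.mk η ⁻¹' ((fun q : EuclideanSpace ℝ (Fin d) × EuclideanSpace ℝ (Fin d) =>
          q.2 + c • q.1) ⁻¹' s)) = 0 := by
      intro η
      have h2 : (Prod.mk η ⁻¹' ((fun q : EuclideanSpace ℝ (Fin d) × EuclideanSpace ℝ (Fin d) =>
          q.2 + c • q.1) ⁻¹' s)) = (fun x : EuclideanSpace ℝ (Fin d) => x + c • η) ⁻¹' s := rfl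
      rw [h2, measure_preimage_add_right volume (c • η) s, h0]
    simp [h1]
  have humeas := hu.aemeasurable
  have hqmpE : ∀ b : EuclideanSpace ℝ (Fin d),
      Measure.QuasiMeasurePreserving (fun x : EuclideanSpace ℝ (Fin d) => x + b)
        volume volume :=
    fun b => (measurePreserving_add_right volume b).quasiMeasurePreserving
  -- the finite-difference energy
  set F : EuclideanSpace ℝ (Fin d) → ℝ≥0∞ :=
    fun w => ∫⁻ x, (‖(ε⁻¹ : ℝ) • (u (x + w) - u x)‖₊ : ℝ≥0∞) ^ p with hFdef
  -- measurability of the integrand, jointly in (η, x)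
  have hpair : AEMeasurable
      (fun q : EuclideanSpace ℝ (Fin d) × EuclideanSpace ℝ (Fin d) =>
        (‖(ε⁻¹ : ℝ) • (u (q.2 + ε • q.1) - u q.2)‖₊ : ℝ≥0∞) ^ p)
      ((volume : Measure (EuclideanSpace ℝ (Fin d))).prod volume) := by
    have h1 : AEMeasurable
        (fun q : EuclideanSpace ℝ (Fin d) × EuclideanSpace ℝ (Fin d) => u (q.2 + ε • q.1))
        ((volume : Measure (EuclideanSpace ℝ (Fin d))).prod volume) :=
      humeas.comp_quasiMeasurePreserving (hqmp ε)
    have h2 : AEMeasurable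
        (fun q : EuclideanSpace ℝ (Fin d) × EuclideanSpace ℝ (Fin d) => u q.2)
        ((volume : Measure (EuclideanSpace ℝ (Fin d))).prod volume) := by
      have := humeas.comp_quasiMeasurePreserving (hqmp 0)
      simpa [Function.comp_def] using this
    exact (((h1.sub h2).const_smul (ε⁻¹ : ℝ)).nnnorm.coe_nnreal_ennreal).pow aemeasurable_const
  -- a.e.-measurability of η ↦ F (ε • η)
  have hΦ : AEMeasurable (fun η : EuclideanSpace ℝ (Fin d) => F (ε • η)) volume := by
    obtain ⟨H, Hmeas, hH⟩ := hpair
    have h1 : ∀ᵐ η ∂(volume : Measure (EuclideanSpace ℝ (Fin d))),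
        (fun η : EuclideanSpace ℝ (Fin d) => ∫⁻ x, H (η, x)) η = F (ε • η) := by
      filter_upwards [Measure.ae_ae_of_ae_prod hH] with η hη
      exact (lintegral_congr_ae hη).symm
    exact (Hmeas.lintegral_prod_right').aemeasurable.congr h1
  -- a.e.-measurability of the integrand for fixed shift
  have hnn : ∀ w : EuclideanSpace ℝ (Fin d),
      AEMeasurable (fun x => (‖(ε⁻¹ : ℝ) • (u (x + w) - u x)‖₊ : ℝ≥0∞)) volume := by
    intro w
    have h1 : AEMeasurable (fun x => u (x + w)) (volume : Measure (EuclideanSpace ℝ (Fin d))) :=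
      humeas.comp_quasiMeasurePreserving (hqmpE w)
    exact ((h1.sub humeas).const_smul (ε⁻¹ : ℝ)).nnnorm.coe_nnreal_ennreal
  -- translation invariance
  have hshift : ∀ w b : EuclideanSpace ℝ (Fin d),
      ∫⁻ x, (‖(ε⁻¹ : ℝ) • (u (x + b + w) - u (x + b))‖₊ : ℝ≥0∞) ^ p = F w := by
    intro w b
    exact lintegral_add_right_eq_self
      (fun x => (‖(ε⁻¹ : ℝ) • (u (x + w) - u x)‖₊ : ℝ≥0∞) ^ p) b
  -- Minkowski inequality for F
  have hMink : ∀ a b : EuclideanSpace ℝ (Fin d),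
      F (a + b) ≤ (F a ^ (1/p) + F b ^ (1/p)) ^ p := by
    intro a b
    set f : EuclideanSpace ℝ (Fin d) → ℝ≥0∞ :=
      fun x => (‖(ε⁻¹ : ℝ) • (u (x + b + a) - u (x + b))‖₊ : ℝ≥0∞) with hfdef
    set g : EuclideanSpace ℝ (Fin d) → ℝ≥0∞ :=
      fun x => (‖(ε⁻¹ : ℝ) • (u (x + b) - u x)‖₊ : ℝ≥0∞) with hgdef
    have hfm : AEMeasurable f volume := by
      have := (hnn a).comp_quasiMeasurePreserving (hqmpE b)
      exact this
    have hgm : AEMeasurable g volume := hnn b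
    have h1 : F (a + b) ≤ ∫⁻ x, (f + g) x ^ p := by
      apply lintegral_mono
      intro x
      apply ENNReal.rpow_le_rpow _ hp0.le
      calc (‖(ε⁻¹ : ℝ) • (u (x + (a + b)) - u x)‖₊ : ℝ≥0∞)
          = (‖(ε⁻¹ : ℝ) • (u (x + b + a) - u (x + b))
              + (ε⁻¹ : ℝ) • (u (x + b) - u x)‖₊ : ℝ≥0∞) := by
            rw [← smul_add, sub_add_sub_cancel, show x + b + a = x + (a + b) by abel]
        _ ≤ f x + g x := by
            rw [← ENNReal.coe_add]
            exact ENNReal.coe_le_coe.mpr (nnnorm_add_le _ _)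
    have h2 := ENNReal.lintegral_Lp_add_le hfm hgm hp.le
    have ha : ∫⁻ x, f x ^ p = F a := hshift a b
    have hb : ∫⁻ x, g x ^ p = F b := rfl
    rw [ha, hb] at h2
    calc F (a + b) ≤ ∫⁻ x, (f + g) x ^ p := h1
      _ = ((∫⁻ x, (f + g) x ^ p) ^ (1/p)) ^ p := by
          rw [← ENNReal.rpow_mul, one_div_mul_cancel hp0', ENNReal.rpow_one]
      _ ≤ (F a ^ (1/p) + F b ^ (1/p)) ^ p := ENNReal.rpow_le_rpow h2 hp0.le
  -- sharp doubling
  have hdouble : ∀ a : EuclideanSpace ℝ (Fin d), F (a + a) ≤ 2 ^ p * F a := by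
    intro a
    calc F (a + a) ≤ (F a ^ (1/p) + F a ^ (1/p)) ^ p := hMink a a
      _ = (2 * F a ^ (1/p)) ^ p := by rw [two_mul]
      _ = 2 ^ p * (F a ^ (1/p)) ^ p := ENNReal.mul_rpow_of_nonneg _ _ hp0.le
      _ = 2 ^ p * F a := by
          rw [← ENNReal.rpow_mul, one_div_mul_cancel hp0', ENNReal.rpow_one]
  -- crude two-point bound
  have hL2 : ∀ a b : EuclideanSpace ℝ (Fin d), F (a + b) ≤ 2 ^ p * (F a + F b) := by
    intro a b
    have h1 : F a ^ (1/p) + F b ^ (1/p) ≤ 2 * (F a ^ (1/p) ⊔ F b ^ (1/p)) := by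
      rw [two_mul]; exact add_le_add le_sup_left le_sup_right
    have h4 : (F a ^ (1/p) ⊔ F b ^ (1/p)) ^ p ≤ F a + F b := by
      rcases le_total (F a ^ (1/p)) (F b ^ (1/p)) with h | h
      · rw [sup_eq_right.mpr h, ← ENNReal.rpow_mul, one_div_mul_cancel hp0', ENNReal.rpow_one]
        exact le_add_self
      · rw [sup_eq_left.mpr h, ← ENNReal.rpow_mul, one_div_mul_cancel hp0', ENNReal.rpow_one]
        exact le_self_add
    calc F (a + b) ≤ (F a ^ (1/p) + F b ^ (1/p)) ^ p := hMink a b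
      _ ≤ (2 * (F a ^ (1/p) ⊔ F b ^ (1/p))) ^ p := ENNReal.rpow_le_rpow h1 hp0.le
      _ = 2 ^ p * (F a ^ (1/p) ⊔ F b ^ (1/p)) ^ p := ENNReal.mul_rpow_of_nonneg _ _ hp0.le
      _ ≤ 2 ^ p * (F a + F b) := mul_le_mul_right h4 _
  -- iterated doubling
  have hpowk : ∀ (k : ℕ) (a : EuclideanSpace ℝ (Fin d)),
      F ((2 ^ k : ℕ) • a) ≤ ((2 : ℝ≥0∞) ^ p) ^ k * F a := by
    intro k
    induction k with
    | zero => intro a; simpa using le_rfl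
    | succ n ih =>
      intro a
      have hsum : ((2 ^ (n+1) : ℕ)) • a = (2 ^ n : ℕ) • a + (2 ^ n : ℕ) • a := by
        rw [← add_nsmul]
        congr 1
        omega
      rw [hsum]
      calc F ((2 ^ n : ℕ) • a + (2 ^ n : ℕ) • a) ≤ 2 ^ p * F ((2 ^ n : ℕ) • a) := hdouble _
        _ ≤ 2 ^ p * (((2 : ℝ≥0∞) ^ p) ^ n * F a) := mul_le_mul_right (ih a) _
        _ = ((2 : ℝ≥0∞) ^ p) ^ (n+1) * F a := by rw [pow_succ]; ring
  -- averaging over the small ball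
  have hL4 : ∀ ξ₀ : EuclideanSpace ℝ (Fin d), ‖ξ₀‖ ≤ r/2 →
      F (ε • ξ₀) ≤ 2 ^ (p+1) * Gen r p ε u / v := by
    intro ξ₀ hξ₀
    have hpt : ∀ η ∈ ball (0 : EuclideanSpace ℝ (Fin d)) (r/2),
        F (ε • ξ₀) ≤ 2 ^ p * (F (ε • (ξ₀ - η)) + F (ε • η)) := by
      intro η hη
      have h := hL2 (ε • (ξ₀ - η)) (ε • η)
      rwa [← smul_add, sub_add_cancel] at h
    have h2top : (2 : ℝ≥0∞) ^ p ≠ ⊤ :=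
      ENNReal.rpow_ne_top_of_nonneg hp0.le ENNReal.ofNat_ne_top
    have hmain : v * F (ε • ξ₀) ≤ 2 ^ p * (Gen r p ε u + Gen r p ε u) := by
      have e1 : v * F (ε • ξ₀)
          = ∫⁻ _η in ball (0 : EuclideanSpace ℝ (Fin d)) (r/2), F (ε • ξ₀) := by
        rw [setLIntegral_const, mul_comm]
      have hf1 : AEMeasurable (fun η : EuclideanSpace ℝ (Fin d) => F (ε • (ξ₀ - η)))
          (volume.restrict (ball (0 : EuclideanSpace ℝ (Fin d)) (r/2))) := by
        have h := hΦ.comp_quasiMeasurePreserving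
          (Measure.measurePreserving_sub_left volume ξ₀).quasiMeasurePreserving
        exact h.restrict
      have hf2 : AEMeasurable (fun η : EuclideanSpace ℝ (Fin d) => F (ε • η))
          (volume.restrict (ball (0 : EuclideanSpace ℝ (Fin d)) (r/2))) := hΦ.restrict
      have b1 : ∫⁻ η in ball (0 : EuclideanSpace ℝ (Fin d)) (r/2), F (ε • (ξ₀ - η))
          ≤ Gen r p ε u := by
        have hsub : ball (0 : EuclideanSpace ℝ (Fin d)) (r/2)
            ⊆ (fun η : EuclideanSpace ℝ (Fin d) => ξ₀ - η) ⁻¹'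
              (ball (0 : EuclideanSpace ℝ (Fin d)) r) := by
          intro η hη
          simp only [mem_ball, dist_zero_right, mem_preimage] at *
          calc ‖ξ₀ - η‖ ≤ ‖ξ₀‖ + ‖η‖ := norm_sub_le _ _
            _ < r/2 + r/2 := add_lt_add_of_le_of_lt hξ₀ hη
            _ = r := add_halves r
        calc ∫⁻ η in ball (0 : EuclideanSpace ℝ (Fin d)) (r/2), F (ε • (ξ₀ - η))
            ≤ ∫⁻ η in (fun η : EuclideanSpace ℝ (Fin d) => ξ₀ - η) ⁻¹'
                (ball (0 : EuclideanSpace ℝ (Fin d)) r), F (ε • (ξ₀ - η)) :=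
              lintegral_mono_set hsub
          _ = ∫⁻ η in ball (0 : EuclideanSpace ℝ (Fin d)) r, F (ε • η) :=
              (Measure.measurePreserving_sub_left volume ξ₀).setLIntegral_comp_preimage_emb
                (MeasurableEquiv.subLeft ξ₀).measurableEmbedding
                (fun η => F (ε • η)) (ball (0 : EuclideanSpace ℝ (Fin d)) r)
          _ = Gen r p ε u := rfl
      have b2 : ∫⁻ η in ball (0 : EuclideanSpace ℝ (Fin d)) (r/2), F (ε • η)
          ≤ Gen r p ε u :=
        lintegral_mono_set (ball_subset_ball (by linarith))
      calc v * F (ε • ξ₀)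
          = ∫⁻ _η in ball (0 : EuclideanSpace ℝ (Fin d)) (r/2), F (ε • ξ₀) := e1
        _ ≤ ∫⁻ η in ball (0 : EuclideanSpace ℝ (Fin d)) (r/2),
              2 ^ p * (F (ε • (ξ₀ - η)) + F (ε • η)) := by
            apply lintegral_mono_ae
            filter_upwards [ae_restrict_mem measurableSet_ball] with η hη using hpt η hη
        _ = 2 ^ p * ((∫⁻ η in ball (0 : EuclideanSpace ℝ (Fin d)) (r/2), F (ε • (ξ₀ - η)))
              + ∫⁻ η in ball (0 : EuclideanSpace ℝ (Fin d)) (r/2), F (ε • η)) := by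
            rw [lintegral_const_mul' _ _ h2top, lintegral_add_left' hf1]
        _ ≤ 2 ^ p * (Gen r p ε u + Gen r p ε u) := mul_le_mul_right (add_le_add b1 b2) _
    have heq : (2 : ℝ≥0∞) ^ p * (Gen r p ε u + Gen r p ε u) = 2 ^ (p+1) * Gen r p ε u := by
      rw [ENNReal.rpow_add _ _ (by norm_num) ENNReal.ofNat_ne_top, ENNReal.rpow_one, ← two_mul]
      ring
    rw [heq] at hmain
    exact (ENNReal.le_div_iff_mul_le (Or.inl hv0.ne') (Or.inl hvt)).mpr (by rwa [mul_comm])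
  -- choice of the dyadic scale
  obtain ⟨k, hk1, hk2⟩ : ∃ k : ℕ, 2 * ‖ξ‖ / r ≤ (2:ℝ) ^ k ∧ (2:ℝ) ^ k ≤ max 1 (2 * (2 * ‖ξ‖ / r)) := by
    rcases le_or_gt (2 * ‖ξ‖ / r) 1 with h | h
    · exact ⟨0, by simpa using h, by simp⟩
    · obtain ⟨n, hn⟩ := pow_unbounded_of_one_lt (2 * ‖ξ‖ / r) one_lt_two
      have hex : ∃ n : ℕ, 2 * ‖ξ‖ / r ≤ (2:ℝ) ^ n := ⟨n, hn.le⟩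
      refine ⟨Nat.find hex, Nat.find_spec hex, ?_⟩
      rcases Nat.eq_zero_or_pos (Nat.find hex) with h0 | hposk
      · rw [h0]; simpa using le_max_left 1 (2 * (2 * ‖ξ‖ / r))
      · have hmin := Nat.find_min hex (Nat.sub_lt hposk one_pos)
        have hlt : (2:ℝ) ^ (Nat.find hex - 1) < 2 * ‖ξ‖ / r := not_le.mp hmin
        have hkk : Nat.find hex = (Nat.find hex - 1) + 1 := (Nat.succ_pred_eq_of_pos hposk).symm
        refine le_trans ?_ (le_max_right _ _)
        rw [hkk, pow_succ]
        nlinarith [hlt]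
  have h2k0 : (0:ℝ) < 2 ^ k := by positivity
  have hξ₀ : ‖(((2:ℝ) ^ k)⁻¹ • ξ : EuclideanSpace ℝ (Fin d))‖ ≤ r / 2 := by
    have h1 : ‖ξ‖ ≤ 2 ^ k * (r/2) := by
      have h2 := mul_le_mul_of_nonneg_right hk1 (le_of_lt (show (0:ℝ) < r/2 by positivity))
      calc ‖ξ‖ = 2 * ‖ξ‖ / r * (r/2) := by field_simp
        _ ≤ 2 ^ k * (r/2) := h2
    rw [norm_smul, norm_inv, Real.norm_eq_abs, abs_of_pos h2k0, inv_mul_le_iff₀ h2k0]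
    exact h1
  have hdecomp : (2 ^ k : ℕ) • (ε • (((2:ℝ) ^ k)⁻¹ • ξ) : EuclideanSpace ℝ (Fin d)) = ε • ξ := by
    rw [← Nat.cast_smul_eq_nsmul ℝ, smul_smul, smul_smul]
    push_cast
    rw [show (2:ℝ) ^ k * ε * ((2:ℝ) ^ k)⁻¹ = ε by
      rw [mul_comm ((2:ℝ) ^ k) ε, mul_assoc, mul_inv_cancel₀ h2k0.ne', mul_one]]
  -- put everything together
  calc (∫⁻ x, (‖(ε⁻¹ : ℝ) • (u (x + ε • ξ) - u x)‖₊ : ℝ≥0∞) ^ p)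
      = F ((2 ^ k : ℕ) • (ε • (((2:ℝ) ^ k)⁻¹ • ξ) : EuclideanSpace ℝ (Fin d))) := by
        rw [hdecomp]
    _ ≤ ((2 : ℝ≥0∞) ^ p) ^ k * F (ε • (((2:ℝ) ^ k)⁻¹ • ξ)) := hpowk k _
    _ ≤ ((2 : ℝ≥0∞) ^ p) ^ k * (2 ^ (p+1) * Gen r p ε u / v) :=
        mul_le_mul_right (hL4 _ hξ₀) _
    _ = (((2 : ℝ≥0∞) ^ p) ^ k * 2 ^ (p+1) / v) * Gen r p ε u := by
        rw [div_eq_mul_inv, div_eq_mul_inv]; ring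
    _ ≤ ENNReal.ofReal (A * 2 ^ (p+1) * vR⁻¹ * (‖ξ‖ ^ p + 1)) * Gen r p ε u := by
        refine mul_le_mul_left ?_ _
        -- rewrite the left side as `ofReal` of a real constant
        have e2 : (2 : ℝ≥0∞) = ENNReal.ofReal (2:ℝ) := by simp
        have ev : v = ENNReal.ofReal vR := (ENNReal.ofReal_toReal hvt).symm
        have lhs_eq : ((2 : ℝ≥0∞) ^ p) ^ k * 2 ^ (p+1) / v
            = ENNReal.ofReal ((((2:ℝ) ^ p) ^ k * 2 ^ (p+1)) / vR) := by
          rw [ENNReal.ofReal_div_of_pos hvR0, ENNReal.ofReal_mul (by positivity),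
            ENNReal.ofReal_pow (by positivity), ← ENNReal.ofReal_rpow_of_pos two_pos,
            ← ENNReal.ofReal_rpow_of_pos two_pos, ← e2, ← ev]
        rw [lhs_eq]
        apply ENNReal.ofReal_le_ofReal
        -- real-number estimate
        have hppow : (((2:ℝ) ^ p) ^ k : ℝ) = ((2:ℝ) ^ k) ^ p := by
          rw [← Real.rpow_natCast ((2:ℝ) ^ p) k, ← Real.rpow_natCast (2:ℝ) k,
            ← Real.rpow_mul (by norm_num), ← Real.rpow_mul (by norm_num), mul_comm]
        have hξp0 : (0:ℝ) ≤ ‖ξ‖ ^ p := Real.rpow_nonneg (norm_nonneg _) _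
        have key : ((2:ℝ) ^ k) ^ p ≤ A * (‖ξ‖ ^ p + 1) := by
          have h1 : ((2:ℝ) ^ k) ^ p ≤ (max 1 (2 * (2 * ‖ξ‖ / r))) ^ p :=
            Real.rpow_le_rpow (by positivity) hk2 hp0.le
          have h2 : (max 1 (2 * (2 * ‖ξ‖ / r))) ^ p ≤ 1 + (4/r) ^ p * ‖ξ‖ ^ p := by
            rcases max_cases 1 (2 * (2 * ‖ξ‖ / r)) with ⟨hm, _⟩ | ⟨hm, _⟩
            · rw [hm, Real.one_rpow]
              have : (0:ℝ) ≤ (4/r) ^ p * ‖ξ‖ ^ p := by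
                have := Real.rpow_nonneg (show (0:ℝ) ≤ 4/r by positivity) p
                nlinarith
              linarith
            · rw [hm, show 2 * (2 * ‖ξ‖ / r) = (4/r) * ‖ξ‖ by ring,
                Real.mul_rpow (by positivity) (norm_nonneg _)]
              have := Real.rpow_nonneg (show (0:ℝ) ≤ 4/r by positivity) p
              nlinarith
          have h3 : 1 + (4/r) ^ p * ‖ξ‖ ^ p ≤ A * (‖ξ‖ ^ p + 1) := by
            have hA2 : (4/r) ^ p ≤ A := le_max_right _ _
            nlinarith
          linarith
        rw [hppow, div_le_iff₀ hvR0]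
        have h2p0 : (0:ℝ) < 2 ^ (p+1) := Real.rpow_pos_of_pos two_pos _
        calc ((2:ℝ) ^ k) ^ p * 2 ^ (p+1) ≤ (A * (‖ξ‖ ^ p + 1)) * 2 ^ (p+1) := by nlinarith [key]
          _ = A * 2 ^ (p+1) * vR⁻¹ * (‖ξ‖ ^ p + 1) * vR := by field_simp
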